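/- Let k ∈ ℕ, α, β ∈ ℝ, and let a, b, c be integers. Define f_k(r) = ∑_{i=0}^{k} r^{2i}, and define the complex-valued functions u(x) = exp(iax), m(x) = f_k(a) exp(iax), M(x) = exp(ibx). Define (P M)(x) = α[ 2u′M′ + uM″ + (2/f_k(b)) m M″ + (1/f_k(b)) m′ M′ ](x) + β[ 2u′M‴ + uM⁗ + (2/f_k(b)) m M⁗ + (1/f_k(b)) m′ M‴ ](x). Then (1/2π) ∫₀^{2π} (P M)(x) · exp(icx) dx equals [ (2ab³ + b⁴)β − (2ab + b²)α ] + [ (ab³ + 2b⁴)β − (ab + 2b²)α ] · f_k(a)/f_k(b) if a + b + c = 0, and equals 0 if a + b + c ≠ 0. -/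

import Mathlib

open Real Complex Finset

private lemma hderiv_exp (n : ℂ) (x : ℝ) :
    HasDerivAt (fun x : ℝ => Complex.exp (I * n * x)) (I * n * Complex.exp (I * n * x)) x := by
  have h1 : HasDerivAt (fun x : ℝ => I * n * (x : ℂ)) (I * n) x := by
    simpa using (Complex.ofRealCLM.hasDerivAt (x := x)).const_mul (I * n)
  simpa [mul_comm] using h1.cexp

private lemma iter_exp (n : ℂ) (j : ℕ) :
    iteratedDeriv j (fun x : ℝ => Complex.exp (I * n * x))
      = fun x : ℝ => (I * n) ^ j * Complex.exp (I * n * x) := by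
  induction j with
  | zero => simp
  | succ j ih =>
    rw [iteratedDeriv_succ, ih]
    funext x
    have := (((hderiv_exp n x).const_mul ((I * n) ^ j))).deriv
    rw [this]
    ring

/-- The general pairing formula `⟨P(m)M, N⟩` from the proof of the main theorem, with
`u = exp(iax)`, `m = f_k(a) exp(iax)`, `M = exp(ibx)`, `N = exp(icx)`. -/
theorem pairing_general (k : ℕ) (α β : ℝ) (a b c : ℤ)
    (fk : ℤ → ℝ) (hfk : ∀ r : ℤ, fk r = ∑ i ∈ Finset.range (k + 1), (r : ℝ) ^ (2 * i))
    (u m M PM : ℝ → ℂ)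
    (hu : ∀ x : ℝ, u x = Complex.exp (I * a * x))
    (hm : ∀ x : ℝ, m x = (fk a : ℂ) * Complex.exp (I * a * x))
    (hM : ∀ x : ℝ, M x = Complex.exp (I * b * x))
    (hPM : ∀ x : ℝ, PM x
      = (α : ℂ) * (2 * deriv u x * deriv M x + u x * iteratedDeriv 2 M x
          + (2 / (fk b : ℂ)) * m x * iteratedDeriv 2 M x
          + (1 / (fk b : ℂ)) * deriv m x * deriv M x)
        + (β : ℂ) * (2 * deriv u x * iteratedDeriv 3 M x + u x * iteratedDeriv 4 M x
          + (2 / (fk b : ℂ)) * m x * iteratedDeriv 4 M x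
          + (1 / (fk b : ℂ)) * deriv m x * iteratedDeriv 3 M x)) :
    (a + b + c = 0 →
      (1 / (2 * (π : ℂ))) * (∫ x in (0:ℝ)..(2 * π), PM x * Complex.exp (I * c * x))
        = ((2 * (a : ℂ) * (b : ℂ) ^ 3 + (b : ℂ) ^ 4) * β
            - (2 * (a : ℂ) * (b : ℂ) + (b : ℂ) ^ 2) * α)
          + (((a : ℂ) * (b : ℂ) ^ 3 + 2 * (b : ℂ) ^ 4) * β
            - ((a : ℂ) * (b : ℂ) + 2 * (b : ℂ) ^ 2) * α) * (fk a : ℂ) / (fk b : ℂ)) ∧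
    (a + b + c ≠ 0 →
      (1 / (2 * (π : ℂ))) * (∫ x in (0:ℝ)..(2 * π), PM x * Complex.exp (I * c * x)) = 0) := by
  have hu' : u = fun x : ℝ => Complex.exp (I * (a : ℂ) * x) := funext hu
  have hm' : m = fun x : ℝ => (fk a : ℂ) * Complex.exp (I * (a : ℂ) * x) := funext hm
  have hM' : M = fun x : ℝ => Complex.exp (I * (b : ℂ) * x) := funext hM
  -- positivity of fk
  have hfkbpos : (1 : ℝ) ≤ fk b := by
    rw [hfk, Finset.sum_range_succ']
    have hpos : 0 ≤ ∑ i ∈ Finset.range k, (b : ℝ) ^ (2 * (i + 1)) :=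
      Finset.sum_nonneg fun i _ => by rw [pow_mul]; exact pow_nonneg (sq_nonneg _) _
    simpa using hpos
  have hfkb : ((fk b : ℝ) : ℂ) ≠ 0 := by
    exact_mod_cast Complex.ofReal_ne_zero.mpr (by linarith)
  set G : ℂ :=
    (α : ℂ) * (2 * (I * a) * (I * b) + (I * b) ^ 2
        + (2 / (fk b : ℂ)) * (fk a : ℂ) * (I * b) ^ 2
        + (1 / (fk b : ℂ)) * ((fk a : ℂ) * (I * a)) * (I * b))
    + (β : ℂ) * (2 * (I * a) * (I * b) ^ 3 + (I * b) ^ 4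
        + (2 / (fk b : ℂ)) * (fk a : ℂ) * (I * b) ^ 4
        + (1 / (fk b : ℂ)) * ((fk a : ℂ) * (I * a)) * (I * b) ^ 3) with hG
  have key : ∀ x : ℝ, PM x * Complex.exp (I * c * x)
      = G * Complex.exp (I * ((a : ℂ) + b + c) * x) := by
    intro x
    have du : deriv u x = I * a * Complex.exp (I * (a : ℂ) * x) := by
      rw [hu']; exact (hderiv_exp a x).deriv
    have dm : deriv m x = (fk a : ℂ) * (I * a * Complex.exp (I * (a : ℂ) * x)) := by
      rw [hm']; exact ((hderiv_exp a x).const_mul _).deriv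
    have dM : deriv M x = I * b * Complex.exp (I * (b : ℂ) * x) := by
      rw [hM']; exact (hderiv_exp b x).deriv
    have dMj : ∀ j : ℕ, iteratedDeriv j M x = (I * (b : ℂ)) ^ j * Complex.exp (I * (b : ℂ) * x) := by
      intro j; rw [hM', iter_exp]
    have hexp : Complex.exp (I * ((a : ℂ) + b + c) * x)
        = Complex.exp (I * (a : ℂ) * x) * Complex.exp (I * (b : ℂ) * x)
          * Complex.exp (I * (c : ℂ) * x) := by
      rw [← Complex.exp_add, ← Complex.exp_add]; ring_nf
    rw [hPM, hu x, hm x, du, dm, dM, dMj 2, dMj 3, dMj 4, hexp, hG]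
    ring
  constructor
  · intro h0
    have hs : ((a : ℂ) + b + c) = 0 := by exact_mod_cast congrArg (Int.cast : ℤ → ℂ) h0
    have hint : (∫ x in (0:ℝ)..(2 * π), PM x * Complex.exp (I * c * x)) = G * (2 * π) := by
      rw [intervalIntegral.integral_congr (fun x _ => key x)]
      simp only [hs, mul_zero, zero_mul, Complex.exp_zero, mul_one]
      rw [intervalIntegral.integral_const]
      simp [Complex.real_smul]
      ring
    rw [hint]
    have hπ : (π : ℂ) ≠ 0 := by exact_mod_cast Real.pi_ne_zero
    have hG' : (1 / (2 * (π : ℂ))) * (G * (2 * π)) = G := by field_simp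
    rw [hG', hG]
    have hI2 : (I : ℂ) ^ 2 = -1 := Complex.I_sq
    field_simp
    ring_nf
    simp [Complex.I_sq]
    ring
  · intro hne
    have hs : ((a : ℂ) + b + c) ≠ 0 := by
      intro h
      apply hne
      exact_mod_cast (by exact_mod_cast h : ((a + b + c : ℤ) : ℂ) = 0)
    have hIs : I * ((a : ℂ) + b + c) ≠ 0 := mul_ne_zero Complex.I_ne_zero hs
    have : (∫ x in (0:ℝ)..(2 * π), PM x * Complex.exp (I * c * x)) = 0 := by
      rw [intervalIntegral.integral_congr (fun x _ => key x),
        intervalIntegral.integral_const_mul]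
      rw [integral_exp_mul_complex hIs]
      have h1 : Complex.exp (I * ((a : ℂ) + b + c) * (2 * π)) = 1 := by
        have : I * ((a : ℂ) + b + c) * (2 * π) = ((a + b + c : ℤ) : ℂ) * (2 * π * I) := by
          push_cast; ring
        rw [this, Complex.exp_int_mul_two_pi_mul_I]
      simp [h1]
    rw [this, mul_zero]
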